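/- Let k ≥ 1, let P, Q, R, S be Hermitian positive definite k×k complex matrices, and let φ, ψ, η, ξ > 0 be real numbers. Then the generalized beta matrix function has the trigonometric integral representation B_{(φ,ψ)}^{(R,S,η,ξ)}(P,Q) = 2 ∫_0^{π/2} (sin θ)^{2P−I} (cos θ)^{2Q−I} E_{φ,ψ}(−R (csc θ)^{2η}) E_{φ,ψ}(−S (sec θ)^{2ξ}) dθ, obtained from the substitution x = sin²θ. -/

import Mathlib

open MeasureTheory Real
open scoped Matrix.Norms.L2Operator ComplexOrder

noncomputable section

/-- For a real `t > 0` and a square complex matrix `A`, `t ^ A := exp (A · log t)`. -/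
def mpow {k : ℕ} (t : ℝ) (A : Matrix (Fin k) (Fin k) ℂ) : Matrix (Fin k) (Fin k) ℂ :=
  NormedSpace.exp ((Real.log t : ℂ) • A)

/-- The two-parameter matrix Mittag-Leffler function `E_{φ,ψ}(A) = ∑ Aⁿ / Γ(φn + ψ)`. -/
def mittagLeffler {k : ℕ} (φ ψ : ℝ) (A : Matrix (Fin k) (Fin k) ℂ) :
    Matrix (Fin k) (Fin k) ℂ :=
  ∑' n : ℕ, (Real.Gamma (φ * n + ψ))⁻¹ • A ^ n

/-- The integrand of the generalized beta-logarithmic matrix function: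
`a^{1-x} b^x · x^{P-I} (1-x)^{Q-I} E_{φ,ψ}(−R x^{−η}) E_{φ,ψ}(−S (1−x)^{−ξ})`. -/
def gblKernel {k : ℕ} (φ ψ η ξ : ℝ) (R S : Matrix (Fin k) (Fin k) ℂ) (a b : ℝ)
    (P Q : Matrix (Fin k) (Fin k) ℂ) (x : ℝ) : Matrix (Fin k) (Fin k) ℂ :=
  (a ^ (1 - x) * b ^ x : ℝ) •
    (mpow x (P - 1) * mpow (1 - x) (Q - 1) *
      mittagLeffler φ ψ ((-(x ^ (-η)) : ℝ) • R) *
      mittagLeffler φ ψ ((-((1 - x) ^ (-ξ)) : ℝ) • S))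

/-- The generalized beta-logarithmic matrix function `BL_{(φ,ψ)}^{(R,S,η,ξ)}(a,b;P,Q)`. -/
def GBL {k : ℕ} (φ ψ η ξ : ℝ) (R S : Matrix (Fin k) (Fin k) ℂ) (a b : ℝ)
    (P Q : Matrix (Fin k) (Fin k) ℂ) : Matrix (Fin k) (Fin k) ℂ :=
  ∫ x in Set.Ioo (0 : ℝ) 1, gblKernel φ ψ η ξ R S a b P Q x

/-- The generalized beta matrix function `B_{(φ,ψ)}^{(R,S,η,ξ)}(P,Q) = BL(1,1;P,Q)`. -/
def GB {k : ℕ} (φ ψ η ξ : ℝ) (R S : Matrix (Fin k) (Fin k) ℂ)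
    (P Q : Matrix (Fin k) (Fin k) ℂ) : Matrix (Fin k) (Fin k) ℂ :=
  GBL φ ψ η ξ R S 1 1 P Q

lemma exp_smul_one {k : ℕ} (c : ℂ) :
    NormedSpace.exp (c • (1 : Matrix (Fin k) (Fin k) ℂ)) = Complex.exp c • 1 := by
  have h1 : c • (1 : Matrix (Fin k) (Fin k) ℂ) = algebraMap ℂ _ c :=
    (Algebra.algebraMap_eq_smul_one c).symm
  rw [h1, ← NormedSpace.algebraMap_exp_comm, Algebra.algebraMap_eq_smul_one,
    Complex.exp_eq_exp_ℂ]

lemma mpow_sq {k : ℕ} {t : ℝ} (ht : 0 < t) (A : Matrix (Fin k) (Fin k) ℂ) :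
    mpow t (2 • A - 1) = t • mpow (t ^ 2) (A - 1) := by
  have hlog : Real.log (t ^ 2) = 2 * Real.log t := by
    rw [Real.log_pow]; push_cast; ring
  have hsplit : ((Real.log t : ℂ)) • ((2:ℕ) • A - 1)
      = ((Real.log (t ^ 2) : ℂ)) • (A - 1)
        + ((Real.log t : ℂ)) • (1 : Matrix (Fin k) (Fin k) ℂ) := by
    rw [hlog]; push_cast
    simp only [smul_sub, smul_smul]
    module
  have hcomm : Commute (((Real.log (t ^ 2) : ℂ)) • (A - 1))
      (((Real.log t : ℂ)) • (1 : Matrix (Fin k) (Fin k) ℂ)) :=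
    ((Commute.one_right _).smul_right _).smul_left _
  rw [mpow, hsplit, Matrix.exp_add_of_commute _ _ hcomm, exp_smul_one]
  have hexp : Complex.exp ((Real.log t : ℂ)) = (t : ℂ) := by
    rw [← Complex.ofReal_exp, Real.exp_log ht]
  rw [hexp, mpow]
  rw [mul_smul_comm, mul_one]
  norm_num [Complex.coe_smul]

lemma sq_rpow_neg {t : ℝ} (ht : 0 < t) (c : ℝ) :
    (t ^ 2 : ℝ) ^ (-c) = t ^ (-(2 * c)) := by
  rw [← Real.rpow_natCast t 2, ← Real.rpow_mul ht.le]
  norm_num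

theorem GB_trig_integral {k : ℕ} (hk : 1 ≤ k) (P Q R S : Matrix (Fin k) (Fin k) ℂ)
    (hP : P.PosDef) (hQ : Q.PosDef) (hR : R.PosDef) (hS : S.PosDef)
    (φ ψ η ξ : ℝ) (hφ : 0 < φ) (hψ : 0 < ψ) (hη : 0 < η) (hξ : 0 < ξ)
    (hInt : IntegrableOn (gblKernel φ ψ η ξ R S 1 1 P Q) (Set.Ioo 0 1)) :
    GB φ ψ η ξ R S P Q =
      (2 : ℝ) • ∫ θ in Set.Ioo (0 : ℝ) (π / 2),
        (mpow (Real.sin θ) (2 • P - 1) * mpow (Real.cos θ) (2 • Q - 1) *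
          mittagLeffler φ ψ ((-(Real.sin θ ^ (-(2 * η))) : ℝ) • R) *
          mittagLeffler φ ψ ((-(Real.cos θ ^ (-(2 * ξ))) : ℝ) • S)) := by
  have hπ : (0:ℝ) < π / 2 := by positivity
  set s : Set ℝ := Set.Ioo (0 : ℝ) (π / 2)
  set f : ℝ → ℝ := fun θ => Real.sin θ ^ 2
  -- basic facts on s
  have hsin : ∀ θ ∈ s, 0 < Real.sin θ ∧ Real.sin θ < 1 ∧ 0 < Real.cos θ := by
    intro θ hθ
    obtain ⟨h1, h2⟩ := hθ
    refine ⟨Real.sin_pos_of_pos_of_lt_pi h1 (h2.trans_le (by linarith [Real.pi_pos])), ?_, ?_⟩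
    · calc Real.sin θ < Real.sin (π/2) := by
            apply Real.strictMonoOn_sin ⟨by linarith, h2.le⟩ ⟨by linarith, le_refl _⟩ h2
        _ = 1 := Real.sin_pi_div_two
    · exact Real.cos_pos_of_mem_Ioo ⟨by linarith, h2⟩
  -- derivative
  have hderiv : ∀ θ ∈ s, HasDerivWithinAt f (2 * Real.sin θ * Real.cos θ) s θ := by
    intro θ _
    have := ((Real.hasDerivAt_sin θ).pow 2).hasDerivWithinAt (s := s)
    exact this.congr_deriv (by norm_num <;> ring)
  -- injectivity
  have hinj : Set.InjOn f s := by
    have : StrictMonoOn f s := by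
      intro a ha b hb hab
      have h1 := hsin a ha
      have h2 := hsin b hb
      have : Real.sin a < Real.sin b :=
        Real.strictMonoOn_sin ⟨by linarith [ha.1], by linarith [ha.2]⟩
          ⟨by linarith [hb.1], by linarith [hb.2]⟩ hab
      exact pow_lt_pow_left₀ this h1.1.le (by norm_num)
    exact this.injOn
  -- image
  have himg : f '' s = Set.Ioo (0:ℝ) 1 := by
    ext x
    constructor
    · rintro ⟨θ, hθ, rfl⟩
      obtain ⟨h1, h2, _⟩ := hsin θ hθ
      simp only [f, Set.mem_Ioo]
      exact ⟨by positivity, by nlinarith⟩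
    · rintro ⟨hx0, hx1⟩
      refine ⟨Real.arcsin (Real.sqrt x), ⟨?_, ?_⟩, ?_⟩
      · exact Real.arcsin_pos.2 (Real.sqrt_pos.2 hx0)
      · exact Real.arcsin_lt_pi_div_two.2 (by
          rw [show (1:ℝ) = Real.sqrt 1 by simp]
          exact Real.sqrt_lt_sqrt hx0.le hx1)
      · show Real.sin (Real.arcsin (Real.sqrt x)) ^ 2 = x
        rw [Real.sin_arcsin (by linarith [Real.sqrt_nonneg x]) (by
          rw [show (1:ℝ) = Real.sqrt 1 by simp]
          exact Real.sqrt_le_sqrt hx1.le)]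
        exact Real.sq_sqrt hx0.le
  -- change of variables
  have hcv := integral_image_eq_integral_abs_deriv_smul measurableSet_Ioo hderiv hinj
      (gblKernel φ ψ η ξ R S 1 1 P Q)
  rw [himg] at hcv
  rw [GB, GBL, hcv]
  rw [← integral_smul]
  apply setIntegral_congr_fun measurableSet_Ioo
  intro θ hθ
  obtain ⟨hs0, hs1, hc0⟩ := hsin θ hθ
  have h1sub : 1 - Real.sin θ ^ 2 = Real.cos θ ^ 2 := by
    nlinarith [Real.sin_sq_add_cos_sq θ]
  have habs : |2 * Real.sin θ * Real.cos θ| = 2 * Real.sin θ * Real.cos θ :=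
    abs_of_pos (by positivity)
  simp only [gblKernel, Real.one_rpow, one_mul, one_smul, habs, h1sub, f]
  rw [sq_rpow_neg hs0 η, sq_rpow_neg hc0 ξ,
    mpow_sq hs0 P, mpow_sq hc0 Q]
  simp only [smul_mul_assoc, mul_smul_comm, smul_smul]
  module

end
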